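/- Let Λ, β, μ, α₁, α₂ be positive reals with R₀ = βΛ/(μ(μ+α₁+α₂)) < 1, set S₀ = Λ/μ, and let S, I : [0,∞) → ℝ with I differentiable, I(t) ≥ 0 and 0 ≤ S(t) ≤ S₀ for all t ≥ 0, satisfying I'(t) = βS(t)I(t) − (μ+α₁+α₂)I(t). Then I(t) ≤ I(0)·e^{−(μ+α₁+α₂)(1−R₀)t} for all t ≥ 0, and consequently I(t) → 0 as t → ∞ (the disease dies out). -/

import Mathlib

open Filter

/-- If `R₀ < 1` then the infected population decays exponentially:
`I(t) ≤ I(0)·e^{−(μ+α₁+α₂)(1−R₀)t}` for all `t ≥ 0`, hence `I(t) → 0`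
as `t → ∞` (the disease dies out). -/
theorem disease_dies_out
    (Λ β μ α₁ α₂ : ℝ)
    (hΛ : 0 < Λ) (hβ : 0 < β) (hμ : 0 < μ) (hα₁ : 0 < α₁) (hα₂ : 0 < α₂)
    (S₀ R₀ : ℝ) (hS₀ : S₀ = Λ / μ)
    (hR₀ : R₀ = β * Λ / (μ * (μ + α₁ + α₂))) (hR₀lt : R₀ < 1)
    (S I : ℝ → ℝ)
    (hIpos : ∀ t ≥ (0:ℝ), 0 ≤ I t)
    (hSrange : ∀ t ≥ (0:ℝ), 0 ≤ S t ∧ S t ≤ S₀)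
    (hI : ∀ t ≥ (0:ℝ), HasDerivAt I
      (β * S t * I t - (μ + α₁ + α₂) * I t) t) :
    (∀ t ≥ (0:ℝ),
        I t ≤ I 0 * Real.exp (-(μ + α₁ + α₂) * (1 - R₀) * t)) ∧
      Filter.Tendsto I Filter.atTop (nhds 0) := by
  set a : ℝ := μ + α₁ + α₂ with ha
  have hapos : 0 < a := by positivity
  set k : ℝ := a * (1 - R₀) with hk
  have hkpos : 0 < k := mul_pos hapos (by linarith)
  have hβS₀ : β * S₀ = a * R₀ := by
    rw [hS₀, hR₀, ha]
    field_simp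
  set f : ℝ → ℝ := fun t => I t * Real.exp (k * t) with hf
  have hf' : ∀ t ∈ Set.Ici (0:ℝ), HasDerivAt f
      ((β * S t * I t - a * I t) * Real.exp (k * t)
        + I t * (Real.exp (k * t) * k)) t := by
    intro t ht
    have := (hI t ht).mul (((hasDerivAt_id t).const_mul k).exp)
    exact this.congr_deriv (by simp)
  have hanti : AntitoneOn f (Set.Ici (0:ℝ)) := by
    apply antitoneOn_of_deriv_nonpos (convex_Ici 0)
    · exact fun t ht => (hf' t ht).continuousAt.continuousWithinAt
    · intro x hx
      rw [interior_Ici] at hx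
      exact ((hf' x (Set.mem_Ici.mpr (le_of_lt hx))).differentiableAt.differentiableWithinAt)
    · intro x hx
      rw [interior_Ici] at hx
      have hx0 : (0:ℝ) ≤ x := le_of_lt hx
      rw [(hf' x hx0).deriv]
      have hSx := (hSrange x hx0).2
      have hIx := hIpos x hx0
      have hkey : β * S x - a + k ≤ 0 := by
        have : β * S x ≤ β * S₀ := by nlinarith
        rw [hβS₀] at this
        nlinarith
      have hE : 0 < Real.exp (k * x) := Real.exp_pos _
      nlinarith [mul_nonneg hIx hE.le]
  have key : ∀ t ≥ (0:ℝ), I t ≤ I 0 * Real.exp (-a * (1 - R₀) * t) := by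
    intro t ht
    have h1 : f t ≤ f 0 := hanti (Set.mem_Ici.mpr le_rfl) ht ht
    have h2 : f 0 = I 0 := by simp [hf]
    have hE : 0 < Real.exp (k * t) := Real.exp_pos _
    have h3 : I t ≤ I 0 / Real.exp (k * t) := by
      rw [le_div_iff₀ hE]
      calc I t * Real.exp (k * t) = f t := rfl
        _ ≤ I 0 := by rw [← h2]; exact h1
    calc I t ≤ I 0 / Real.exp (k * t) := h3
      _ = I 0 * Real.exp (-a * (1 - R₀) * t) := by
          rw [show -a * (1 - R₀) * t = -(k * t) by rw [hk]; ring,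
            Real.exp_neg, div_eq_mul_inv]
  refine ⟨key, ?_⟩
  have hlim : Tendsto (fun t => I 0 * Real.exp (-a * (1 - R₀) * t)) atTop (nhds 0) := by
    have h1 : Tendsto (fun t : ℝ => Real.exp (-a * (1 - R₀) * t)) atTop (nhds 0) := by
      apply Real.tendsto_exp_atBot.comp
      exact Tendsto.const_mul_atTop_of_neg (by nlinarith : -a * (1 - R₀) < 0) tendsto_id
    simpa using h1.const_mul (I 0)
  apply squeeze_zero' (eventually_atTop.2 ⟨0, fun t ht => hIpos t ht⟩)
    (eventually_atTop.2 ⟨0, fun t ht => key t ht⟩) hlim
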